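/- Let μ be a Borel measure on (ℝⁿ, Euclidean distance) with 0 < μ(B) < ∞ for every ball B. Suppose there exist 1 ≤ p < ∞, σ > 1, and C_S > 0 such that for every ball B = B(y,R) and every compactly supported Lipschitz function φ on B, ((1/μ(B)) ∫_B |φ|^{pσ} dμ)^{1/(pσ)} ≤ C_S R ((1/μ(B)) ∫_B |∇φ|^p dμ)^{1/p} + C_S ((1/μ(B)) ∫_B |φ|^p dμ)^{1/p}. Then μ is doubling: there exists C_D depending only on p, σ, C_S such that μ(B(y,2R)) ≤ C_D μ(B(y,R)) for all y ∈ ℝⁿ and R > 0. -/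

import Mathlib

open MeasureTheory Metric ENNReal NNReal



lemma aux_cutoff {E : Type*} [PseudoMetricSpace E] (x : E) (r : ℝ) (hr : 0 < r) :
    ∃ φ : E → ℝ, LipschitzWith (4/r).toNNReal φ ∧
      (∀ z, 0 ≤ φ z) ∧ (∀ z, φ z ≤ 1) ∧
      (∀ z, dist z x ≤ r/2 → φ z = 1) ∧
      (∀ z, 3*r/4 ≤ dist z x → φ z = 0) := by
  have hc : (0:ℝ) ≤ 4/r := by positivity
  refine ⟨(fun t : ℝ => min 1 (max 0 (3 - (4/r) * t))) ∘ (fun z => dist z x),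
    ?_, fun z => ?_, fun z => ?_, fun z hz => ?_, fun z hz => ?_⟩
  · have l1 : LipschitzWith 1 (fun z : E => dist z x) := LipschitzWith.dist_left x
    have l2 : LipschitzWith (4/r).toNNReal (fun t : ℝ => 3 - (4/r) * t) := by
      apply LipschitzWith.of_dist_le_mul
      intro a b
      have h1 : (3 - 4/r*a) - (3 - 4/r*b) = (4/r) * (b - a) := by ring
      rw [Real.dist_eq, h1, abs_mul, abs_of_nonneg hc, Real.coe_toNNReal _ hc,
        Real.dist_eq, abs_sub_comm b a]
    have := ((l2.const_max 0).const_min 1).comp l1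
    simpa using this
  · exact le_min zero_le_one (le_max_left 0 _)
  · exact min_le_left _ _
  · have h2 : (4/r) * (r/2) = 2 := by field_simp; ring
    have h3 : (4/r) * dist z x ≤ 2 := by
      calc (4/r) * dist z x ≤ (4/r) * (r/2) := by
            exact mul_le_mul_of_nonneg_left hz hc
        _ = 2 := h2
    have h4 : (1:ℝ) ≤ 3 - (4/r) * dist z x := by linarith
    simp only [Function.comp_apply]
    rw [max_eq_right (by linarith : (0:ℝ) ≤ 3 - (4/r) * dist z x), min_eq_left h4]
  · have h2 : (4/r) * (3*r/4) = 3 := by field_simp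
    have h3 : (3:ℝ) ≤ (4/r) * dist z x := by
      calc (3:ℝ) = (4/r) * (3*r/4) := h2.symm
        _ ≤ (4/r) * dist z x := mul_le_mul_of_nonneg_left hz hc
    simp only [Function.comp_apply]
    rw [max_eq_left (by linarith : 3 - (4/r) * dist z x ≤ 0), min_eq_right zero_le_one]

lemma aux_int_le {α : Type*} [MeasurableSpace α] (μ : Measure α) (B s : Set α)
    (hs : MeasurableSet s) (hfin : μ s ≠ ⊤) (f : α → ℝ) (c : ℝ) (hc : 0 ≤ c)
    (h0 : ∀ z, 0 ≤ f z) (hle : ∀ z ∈ s, f z ≤ c) (hz : ∀ z ∉ s, f z = 0) :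
    ∫ z in B, f z ∂μ ≤ c * (μ s).toReal := by
  have hg : Integrable (s.indicator fun _ => c) (μ.restrict B) := by
    apply (integrable_indicator_iff hs).2
    refine integrableOn_const ?_
    exact (lt_of_le_of_lt (Measure.restrict_apply_le _ _) (lt_top_iff_ne_top.2 hfin)).ne
  have hfg : ∀ z, f z ≤ s.indicator (fun _ => c) z := by
    intro z; by_cases h : z ∈ s
    · simpa [Set.indicator_of_mem h] using hle z h
    · rw [Set.indicator_of_notMem h, hz z h]
  calc ∫ z in B, f z ∂μ ≤ ∫ z, s.indicator (fun _ => c) z ∂(μ.restrict B) :=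
        integral_mono_of_nonneg (ae_of_all _ h0) hg (ae_of_all _ hfg)
    _ = ((μ.restrict B) s).toReal • c := integral_indicator_const c hs
    _ ≤ (μ s).toReal * c := by
        rw [smul_eq_mul]
        exact mul_le_mul_of_nonneg_right
          (ENNReal.toReal_mono hfin (Measure.restrict_apply_le _ _)) hc
    _ = c * (μ s).toReal := mul_comm _ _


lemma aux_coord_le_dist {n : ℕ} (x z : EuclideanSpace ℝ (Fin n)) (i : Fin n) :
    |x i - z i| ≤ dist x z := by
  rw [EuclideanSpace.dist_eq]
  have h1 : dist (x i) (z i) ^ 2 ≤ ∑ j, dist (x j) (z j) ^ 2 :=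
    Finset.single_le_sum (f := fun j => dist (x j) (z j) ^ 2)
      (fun j _ => sq_nonneg _) (Finset.mem_univ i)
  calc |x i - z i| = Real.sqrt (dist (x i) (z i) ^ 2) := by
        rw [Real.dist_eq, Real.sqrt_sq_eq_abs, abs_abs]
    _ ≤ _ := Real.sqrt_le_sqrt h1

lemma aux_grid {n : ℕ} (y : EuclideanSpace ℝ (Fin n)) (R r : ℝ) (M : ℕ)
    (hR : 0 < R) (hr : 0 < r) (hrR : r ≤ R/2)
    (hM : R/4 * (2*(n+1)) / r ≤ M) :
    ∃ T : Finset (EuclideanSpace ℝ (Fin n)),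
      T.card ≤ (2*M+1)^n ∧
      (∀ g ∈ T, g ∈ closedBall y (R/2)) ∧
      ball y (R/4) ⊆ ⋃ g ∈ T, ball g r := by
  classical
  set δ : ℝ := r / (2*(n+1)) with hδ
  have hn1 : (0:ℝ) < (n:ℝ)+1 := by positivity
  have hδ0 : 0 < δ := by positivity
  set gpt : (Fin n → ℤ) → EuclideanSpace ℝ (Fin n) :=
    fun c => (WithLp.equiv 2 (Fin n → ℝ)).symm (fun i => y i + δ * c i) with hgpt
  have hgpt_apply : ∀ c i, gpt c i = y i + δ * c i := by
    intro c i; rw [hgpt]; rfl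
  set T0 : Finset (Fin n → ℤ) := Finset.Icc (fun _ => -(M:ℤ)) (fun _ => (M:ℤ)) with hT0
  refine ⟨(T0.filter (fun c => gpt c ∈ closedBall y (R/2))).image gpt, ?_, ?_, ?_⟩
  · calc ((T0.filter (fun c => gpt c ∈ closedBall y (R/2))).image gpt).card
        ≤ (T0.filter (fun c => gpt c ∈ closedBall y (R/2))).card := Finset.card_image_le
      _ ≤ T0.card := Finset.card_filter_le _ _
      _ = (2*M+1)^n := by
          rw [hT0, Pi.card_Icc]
          have heach : ∀ i : Fin n, (Finset.Icc (-(M:ℤ)) (M:ℤ)).card = 2*M+1 := by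
            intro i
            rw [Int.card_Icc]
            omega
          rw [Finset.prod_congr rfl (fun i _ => heach i), Finset.prod_const,
            Finset.card_univ, Fintype.card_fin]
  · intro g hg
    obtain ⟨c, hc, rfl⟩ := Finset.mem_image.mp hg
    exact (Finset.mem_filter.mp hc).2
  · intro x hx
    have hxy : dist x y < R/4 := mem_ball.mp hx
    set c : Fin n → ℤ := fun i => round ((x i - y i)/δ) with hc
    have hcoord : ∀ i, |x i - gpt c i| ≤ δ/2 := by
      intro i
      rw [hgpt_apply]
      have h1 : x i - (y i + δ * c i) = δ * ((x i - y i)/δ - c i) := by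
        field_simp
        ring
      rw [h1, abs_mul, abs_of_nonneg hδ0.le]
      have h2 : |(x i - y i)/δ - ((c i : ℤ) : ℝ)| ≤ 1/2 := by
        rw [hc]; exact abs_sub_round _
      calc δ * |(x i - y i)/δ - ((c i : ℤ):ℝ)| ≤ δ * (1/2) :=
            mul_le_mul_of_nonneg_left h2 hδ0.le
        _ = δ/2 := by ring
    have hdist : dist x (gpt c) ≤ r/4 := by
      rw [EuclideanSpace.dist_eq]
      have h1 : ∀ i : Fin n, dist (x i) (gpt c i) ^ 2 ≤ (δ/2)^2 := by
        intro i
        rw [Real.dist_eq]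
        exact pow_le_pow_left₀ (abs_nonneg _) (hcoord i) 2
      have h2 : ∑ i, dist (x i) (gpt c i) ^ 2 ≤ (n:ℝ) * (δ/2)^2 := by
        calc ∑ i, dist (x i) (gpt c i) ^ 2 ≤ ∑ _i : Fin n, (δ/2)^2 :=
              Finset.sum_le_sum (fun i _ => h1 i)
          _ = (n:ℝ) * (δ/2)^2 := by
              rw [Finset.sum_const, Finset.card_univ, Fintype.card_fin, nsmul_eq_mul]
      have h3 : (n:ℝ) * (δ/2)^2 ≤ (((n:ℝ)+1) * (δ/2))^2 := by
        have hnn : (n:ℝ) ≤ ((n:ℝ)+1)^2 := by nlinarith [Nat.cast_nonneg (α := ℝ) n]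
        calc (n:ℝ) * (δ/2)^2 ≤ ((n:ℝ)+1)^2 * (δ/2)^2 :=
              mul_le_mul_of_nonneg_right hnn (sq_nonneg _)
          _ = (((n:ℝ)+1) * (δ/2))^2 := by ring
      have h4 : ((n:ℝ)+1) * (δ/2) = r/4 := by
        rw [hδ]; field_simp; ring
      calc Real.sqrt (∑ i, dist (x i) (gpt c i) ^ 2)
          ≤ Real.sqrt ((((n:ℝ)+1) * (δ/2))^2) := Real.sqrt_le_sqrt (h2.trans h3)
        _ = ((n:ℝ)+1) * (δ/2) := Real.sqrt_sq (by positivity)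
        _ = r/4 := h4
    have hgc_mem : gpt c ∈ closedBall y (R/2) := by
      rw [mem_closedBall]
      calc dist (gpt c) y ≤ dist (gpt c) x + dist x y := dist_triangle _ _ _
        _ ≤ r/4 + R/4 := by
            rw [dist_comm]
            exact add_le_add hdist hxy.le
        _ ≤ R/2 := by linarith
    have hbound : ∀ i, -(M:ℤ) ≤ c i ∧ c i ≤ M := by
      intro i
      have h6 : |(x i - y i)/δ| ≤ (M:ℝ) := by
        rw [abs_div, abs_of_nonneg hδ0.le, div_le_iff₀ hδ0]
        calc |x i - y i| ≤ dist x y := aux_coord_le_dist x y i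
          _ ≤ R/4 := hxy.le
          _ = (R/4 * (2*(n+1)) / r) * δ := by rw [hδ]; field_simp
          _ ≤ (M:ℝ) * δ := mul_le_mul_of_nonneg_right hM hδ0.le
      have h5 : |((c i : ℤ):ℝ)| ≤ (M:ℝ) + 1/2 := by
        calc |((c i:ℤ):ℝ)| = |((x i - y i)/δ) - (((x i - y i)/δ) - ((c i:ℤ):ℝ))| := by
              ring_nf
          _ ≤ |(x i - y i)/δ| + |((x i - y i)/δ) - ((c i:ℤ):ℝ)| := abs_sub _ _
          _ ≤ (M:ℝ) + 1/2 := by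
              apply add_le_add h6
              rw [hc]; exact abs_sub_round _
      have h7 : ((|c i| : ℤ):ℝ) < (M:ℝ) + 1 := by
        rw [Int.cast_abs]
        linarith
      have h8 : |c i| < (M:ℤ) + 1 := by exact_mod_cast h7
      exact abs_le.mp (Int.lt_add_one_iff.mp h8)
    have hcT0 : c ∈ T0 := by
      rw [hT0, Finset.mem_Icc]
      exact ⟨fun i => (hbound i).1, fun i => (hbound i).2⟩
    refine Set.mem_biUnion
      (Finset.mem_image_of_mem gpt (Finset.mem_filter.mpr ⟨hcT0, hgc_mem⟩)) ?_
    rw [mem_ball]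
    calc dist x (gpt c) ≤ r/4 := hdist
      _ < r := by linarith


lemma aux_exp_choice (σ : ℝ) (hσ : 1 < σ) (n D : ℕ) :
    ∃ k : ℕ, ((k*n : ℕ):ℝ) + (D:ℝ) ≤ σ^k := by
  set t : ℝ := σ - 1 with ht
  have ht0 : 0 < t := by simp only [ht]; linarith
  obtain ⟨j0, hj0⟩ := exists_nat_ge (((2*n + D : ℕ):ℝ) / t^2)
  set j : ℕ := max 1 j0 with hj
  have hj1 : (1:ℝ) ≤ (j:ℝ) := by
    have : 1 ≤ j := le_max_left _ _
    exact_mod_cast this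
  have hjt2 : ((2*n + D:ℕ):ℝ) ≤ (j:ℝ) * t^2 := by
    have hle : (((2*n+D:ℕ):ℝ))/t^2 ≤ (j:ℝ) := by
      refine le_trans hj0 ?_
      exact_mod_cast le_max_right 1 j0
    calc ((2*n+D:ℕ):ℝ) = (((2*n+D:ℕ):ℝ)/t^2) * t^2 := by field_simp
      _ ≤ (j:ℝ) * t^2 := mul_le_mul_of_nonneg_right hle (by positivity)
  refine ⟨2*j, ?_⟩
  have hb : (j:ℝ)*t ≤ σ^j := by
    have h1 := one_add_mul_le_pow (by linarith : (-2:ℝ) ≤ t) j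
    have h2 : (1:ℝ) + t = σ := by simp only [ht]; ring
    rw [h2] at h1
    linarith
  have hsq : ((j:ℝ)*t)^2 ≤ σ^(2*j) := by
    have h3 : σ^(2*j) = (σ^j)^2 := by rw [mul_comm, pow_mul]
    rw [h3]
    exact pow_le_pow_left₀ (by positivity) hb 2
  have hfin : ((2*j*n:ℕ):ℝ) + (D:ℝ) ≤ ((j:ℝ)*t)^2 := by
    push_cast
    push_cast at hjt2
    nlinarith [hjt2, hj1, Nat.cast_nonneg (α := ℝ) n, Nat.cast_nonneg (α := ℝ) D]
  exact le_trans hfin hsq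

lemma aux_step {n : ℕ} (μ : Measure (EuclideanSpace ℝ (Fin n)))
    (hμ : ∀ (y : EuclideanSpace ℝ (Fin n)) (R : ℝ), 0 < R →
      0 < μ (ball y R) ∧ μ (ball y R) < ⊤)
    (p σ C_S : ℝ) (hp : 1 ≤ p) (hσ : 1 < σ) (hC : 0 < C_S)
    (hSob : ∀ (y : EuclideanSpace ℝ (Fin n)) (R : ℝ), 0 < R →
      ∀ φ : EuclideanSpace ℝ (Fin n) → ℝ,
        (∃ L : ℝ≥0, LipschitzWith L φ) → HasCompactSupport φ → tsupport φ ⊆ ball y R →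
        ((μ (ball y R)).toReal⁻¹ * ∫ x in ball y R, |φ x| ^ (p * σ) ∂μ) ^ (1 / (p * σ)) ≤
          C_S * R * ((μ (ball y R)).toReal⁻¹ *
              ∫ x in ball y R, ‖fderiv ℝ φ x‖ ^ p ∂μ) ^ (1 / p) +
          C_S * ((μ (ball y R)).toReal⁻¹ * ∫ x in ball y R, |φ x| ^ p ∂μ) ^ (1 / p))
    (y : EuclideanSpace ℝ (Fin n)) (R : ℝ) (hR : 0 < R)
    (x : EuclideanSpace ℝ (Fin n)) (r : ℝ) (hr : 0 < r)
    (hsub : closedBall x r ⊆ ball y (2*R)) :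
    (μ (ball y (2*R))).toReal⁻¹ * (μ (ball x (r/2))).toReal ≤
      (C_S * (8*R/r + 1)) ^ (p*σ) *
        ((μ (ball y (2*R))).toReal⁻¹ * (μ (ball x r)).toReal) ^ σ := by
  have hp0 : (0:ℝ) < p := lt_of_lt_of_le one_pos hp
  have hσ0 : (0:ℝ) < σ := lt_trans one_pos hσ
  have hpσ : 0 < p * σ := mul_pos hp0 hσ0
  obtain ⟨φ, hlip, hφ0, hφ1, hφeq1, hφeq0⟩ := aux_cutoff x r hr
  have hB₀pos := hμ y (2*R) (by linarith)
  set B₀ := ball y (2*R) with hB₀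
  set m := (μ B₀).toReal with hm
  have hmpos : 0 < m := ENNReal.toReal_pos (ne_of_gt hB₀pos.1) (ne_of_lt hB₀pos.2)
  have hminv : (0:ℝ) ≤ m⁻¹ := inv_nonneg.2 hmpos.le
  -- support facts
  have hsupp : tsupport φ ⊆ closedBall x (3*r/4) := by
    apply closure_minimal _ isClosed_closedBall
    intro z hz
    by_contra hzc
    have hd : 3*r/4 ≤ dist z x := le_of_not_gt (fun hlt => hzc (mem_closedBall.mpr hlt.le))
    exact hz (hφeq0 z hd)
  have hsub34 : closedBall x (3*r/4) ⊆ ball x r := closedBall_subset_ball (by linarith)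
  have hballr : ball x r ⊆ B₀ := ball_subset_closedBall.trans hsub
  have hcompact : HasCompactSupport φ :=
    (isCompact_closedBall x (3*r/4)).of_isClosed_subset (isClosed_tsupport φ) hsupp
  have htsub : tsupport φ ⊆ ball y (2*R) := hsupp.trans (hsub34.trans hballr)
  have key := hSob y (2*R) (by linarith) φ ⟨_, hlip⟩ hcompact htsub
  -- basic facts
  have habs_le : ∀ z, |φ z| ≤ 1 := fun z => abs_le.mpr ⟨by linarith [hφ0 z], hφ1 z⟩
  have hcont1 : Continuous fun z => |φ z| ^ (p*σ) :=
    Continuous.rpow_const hlip.continuous.abs (fun z => Or.inr hpσ.le)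
  have hint1 : IntegrableOn (fun z => |φ z| ^ (p*σ)) B₀ μ := by
    apply Measure.integrableOn_of_bounded (ne_of_lt hB₀pos.2) hcont1.aestronglyMeasurable (M := 1)
    refine ae_of_all _ fun z => ?_
    rw [Real.norm_eq_abs, abs_of_nonneg (Real.rpow_nonneg (abs_nonneg _) _)]
    exact Real.rpow_le_one (abs_nonneg _) (habs_le z) hpσ.le
  -- lower bound for the pσ integral
  have hhalf_sub : ball x (r/2) ⊆ B₀ := (ball_subset_ball (by linarith)).trans hballr
  have hlow : (μ (ball x (r/2))).toReal ≤ ∫ z in B₀, |φ z| ^ (p*σ) ∂μ := by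
    have h1 : ∫ z in ball x (r/2), (1:ℝ) ∂μ = (μ (ball x (r/2))).toReal := by
      rw [setIntegral_const, smul_eq_mul, mul_one, measureReal_def]
    have h2 : ∫ z in ball x (r/2), |φ z| ^ (p*σ) ∂μ = ∫ z in ball x (r/2), (1:ℝ) ∂μ := by
      apply setIntegral_congr_fun measurableSet_ball
      intro z hz
      show |φ z| ^ (p*σ) = 1
      rw [hφeq1 z (le_of_lt (mem_ball.mp hz)), abs_one, Real.one_rpow]
    rw [← h1, ← h2]
    exact setIntegral_mono_set hint1
      (ae_of_all _ fun z => Real.rpow_nonneg (abs_nonneg _) _)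
      (HasSubset.Subset.eventuallyLE hhalf_sub)
  have hrfin : μ (ball x r) ≠ ⊤ := ne_of_lt (hμ x r hr).2
  -- upper bound for the gradient integral
  have hcr : (0:ℝ) ≤ 4/r := by positivity
  have hgradpt : ∀ z, ‖fderiv ℝ φ z‖ ≤ 4/r := by
    intro z
    have := norm_fderiv_le_of_lipschitz ℝ hlip (x₀ := z)
    rwa [Real.coe_toNNReal _ hcr] at this
  have hgrad0 : ∀ z, z ∉ ball x r → ‖fderiv ℝ φ z‖ ^ p = 0 := by
    intro z hz
    have h0 : fderiv ℝ φ z = 0 := by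
      by_contra h
      exact hz (hsub34 (hsupp (support_fderiv_subset ℝ h)))
    rw [h0, norm_zero, Real.zero_rpow (ne_of_gt hp0)]
  have hgrad_le : ∫ z in B₀, ‖fderiv ℝ φ z‖ ^ p ∂μ ≤ (4/r)^p * (μ (ball x r)).toReal :=
    aux_int_le μ B₀ (ball x r) measurableSet_ball hrfin _ ((4/r)^p)
      (Real.rpow_nonneg hcr _)
      (fun z => Real.rpow_nonneg (norm_nonneg _) _)
      (fun z _ => Real.rpow_le_rpow (norm_nonneg _) (hgradpt z) hp0.le)
      hgrad0
  -- upper bound for the p integral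
  have h0_le : ∫ z in B₀, |φ z| ^ p ∂μ ≤ 1 * (μ (ball x r)).toReal := by
    apply aux_int_le μ B₀ (ball x r) measurableSet_ball hrfin _ 1 zero_le_one
      (fun z => Real.rpow_nonneg (abs_nonneg _) _)
      (fun z _ => Real.rpow_le_one (abs_nonneg _) (habs_le z) hp0.le)
    intro z hz
    have hd : 3*r/4 ≤ dist z x := by
      have : r ≤ dist z x := le_of_not_gt (fun h => hz (mem_ball.mpr h))
      linarith
    rw [hφeq0 z hd, abs_zero, Real.zero_rpow (ne_of_gt hp0)]
  -- combine
  set e := (μ (ball x (r/2))).toReal with he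
  set f := (μ (ball x r)).toReal with hf
  have hf0 : (0:ℝ) ≤ f := ENNReal.toReal_nonneg
  have he0 : (0:ℝ) ≤ e := ENNReal.toReal_nonneg
  have hint_grad_nonneg : (0:ℝ) ≤ ∫ z in B₀, ‖fderiv ℝ φ z‖ ^ p ∂μ :=
    integral_nonneg (fun z => Real.rpow_nonneg (norm_nonneg _) _)
  have hint0_nonneg : (0:ℝ) ≤ ∫ z in B₀, |φ z| ^ p ∂μ :=
    integral_nonneg (fun z => Real.rpow_nonneg (abs_nonneg _) _)
  have hL : (m⁻¹ * e) ^ (1/(p*σ)) ≤ (m⁻¹ * ∫ z in B₀, |φ z| ^ (p*σ) ∂μ) ^ (1/(p*σ)) :=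
    Real.rpow_le_rpow (by positivity) (mul_le_mul_of_nonneg_left hlow hminv) (by positivity)
  have hsimp : (m⁻¹ * ((4/r)^p * f))^(1/p) = (4/r) * (m⁻¹ * f)^(1/p) := by
    rw [show m⁻¹ * ((4/r)^p * f) = (4/r)^p * (m⁻¹*f) by ring,
      Real.mul_rpow (Real.rpow_nonneg hcr _) (by positivity),
      ← Real.rpow_mul hcr, mul_one_div_cancel (ne_of_gt hp0), Real.rpow_one]
  have hG1 : (m⁻¹ * ∫ z in B₀, ‖fderiv ℝ φ z‖ ^ p ∂μ)^(1/p) ≤ (4/r) * (m⁻¹ * f)^(1/p) := by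
    rw [← hsimp]
    exact Real.rpow_le_rpow (by positivity)
      (mul_le_mul_of_nonneg_left hgrad_le hminv) (by positivity)
  have hG2 : (m⁻¹ * ∫ z in B₀, |φ z| ^ p ∂μ)^(1/p) ≤ (m⁻¹ * f)^(1/p) := by
    have : m⁻¹ * ∫ z in B₀, |φ z| ^ p ∂μ ≤ m⁻¹ * f := by
      have := mul_le_mul_of_nonneg_left h0_le hminv
      simpa using this
    exact Real.rpow_le_rpow (by positivity) this (by positivity)
  have hchain : (m⁻¹ * e) ^ (1/(p*σ)) ≤ (C_S * (8*R/r + 1)) * (m⁻¹*f)^(1/p) := by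
    have hKeq : C_S*(2*R)*((4/r) * (m⁻¹*f)^(1/p)) + C_S * (m⁻¹*f)^(1/p)
        = (C_S * (8*R/r + 1)) * (m⁻¹*f)^(1/p) := by
      field_simp
      ring
    calc (m⁻¹ * e) ^ (1/(p*σ))
        ≤ C_S * (2*R) * ((m⁻¹ * ∫ z in B₀, ‖fderiv ℝ φ z‖ ^ p ∂μ)^(1/p)) +
            C_S * ((m⁻¹ * ∫ z in B₀, |φ z| ^ p ∂μ)^(1/p)) := le_trans hL key
      _ ≤ C_S*(2*R)*((4/r) * (m⁻¹*f)^(1/p)) + C_S * (m⁻¹*f)^(1/p) := by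
          have h1 := mul_le_mul_of_nonneg_left hG1 (by positivity : (0:ℝ) ≤ C_S * (2*R))
          have h2 := mul_le_mul_of_nonneg_left hG2 hC.le
          linarith
      _ = (C_S * (8*R/r + 1)) * (m⁻¹*f)^(1/p) := hKeq
  have hKpos : (0:ℝ) < C_S * (8*R/r + 1) := by positivity
  have hpne : p ≠ 0 := ne_of_gt hp0
  have hpσne : p * σ ≠ 0 := ne_of_gt hpσ
  have hfinal := Real.rpow_le_rpow (by positivity) hchain hpσ.le
  rw [← Real.rpow_mul (by positivity), show 1/(p*σ)*(p*σ) = 1 by field_simp,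
    Real.rpow_one] at hfinal
  rw [Real.mul_rpow hKpos.le (Real.rpow_nonneg (by positivity) _),
    ← Real.rpow_mul (by positivity), show 1/p*(p*σ) = σ by field_simp] at hfinal
  exact hfinal

theorem stmt12 (n : ℕ) (μ : Measure (EuclideanSpace ℝ (Fin n)))
    (hμ : ∀ (y : EuclideanSpace ℝ (Fin n)) (R : ℝ), 0 < R →
      0 < μ (ball y R) ∧ μ (ball y R) < ⊤)
    (p σ C_S : ℝ) (hp : 1 ≤ p) (hσ : 1 < σ) (hC : 0 < C_S)
    (hSob : ∀ (y : EuclideanSpace ℝ (Fin n)) (R : ℝ), 0 < R →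
      ∀ φ : EuclideanSpace ℝ (Fin n) → ℝ,
        (∃ L : ℝ≥0, LipschitzWith L φ) → HasCompactSupport φ → tsupport φ ⊆ ball y R →
        ((μ (ball y R)).toReal⁻¹ * ∫ x in ball y R, |φ x| ^ (p * σ) ∂μ) ^ (1 / (p * σ)) ≤
          C_S * R * ((μ (ball y R)).toReal⁻¹ *
              ∫ x in ball y R, ‖fderiv ℝ φ x‖ ^ p ∂μ) ^ (1 / p) +
          C_S * ((μ (ball y R)).toReal⁻¹ * ∫ x in ball y R, |φ x| ^ p ∂μ) ^ (1 / p)) :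
    ∃ C_D : ℝ≥0, 1 ≤ C_D ∧
      ∀ (y : EuclideanSpace ℝ (Fin n)) (R : ℝ), 0 < R →
        μ (ball y (2 * R)) ≤ C_D * μ (ball y R) := by
  classical
  have hp0 : (0:ℝ) < p := lt_of_lt_of_le one_pos hp
  have hσ0 : (0:ℝ) < σ := lt_trans one_pos hσ
  have hpσ : 0 < p * σ := mul_pos hp0 hσ0
  have hσ1 : (0:ℝ) < σ - 1 := by linarith
  -- constants depending only on p, σ, C_S
  set G : ℝ := (32*C_S)^(p*σ) with hG
  have hG0 : 0 < G := Real.rpow_pos_of_pos (by linarith) _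
  set ρ : ℝ := (2:ℝ)^(p*σ) with hρ
  have hρ1 : 1 ≤ ρ := by
    rw [hρ]
    calc (1:ℝ) = 1^(p*σ) := (Real.one_rpow _).symm
      _ ≤ 2^(p*σ) := Real.rpow_le_rpow zero_le_one one_le_two hpσ.le
  have hρ0 : 0 < ρ := lt_of_lt_of_le one_pos hρ1
  have hρs0 : 0 < ρ^((1:ℝ)/(σ-1)) := Real.rpow_pos_of_pos hρ0 _
  set H : ℝ := (G * ρ^((1:ℝ)/(σ-1)))⁻¹ with hH
  have hH0 : 0 < H := inv_pos.2 (mul_pos hG0 hρs0)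
  set A : ℝ := min 1 (H^((1:ℝ)/(σ-1))) with hA
  have hA0 : 0 < A := lt_min one_pos (Real.rpow_pos_of_pos hH0 _)
  have hA1 : A ≤ 1 := min_le_left _ _
  refine ⟨1 + Real.toNNReal (2/A), le_add_of_nonneg_right (by positivity), ?_⟩
  intro y R hR
  by_contra hcon
  have hB := hμ y (2*R) (by linarith)
  have hBR := hμ y R hR
  set m := (μ (ball y (2*R))).toReal with hm
  have hm0 : 0 < m := ENNReal.toReal_pos (ne_of_gt hB.1) (ne_of_lt hB.2)
  -- reduce to a real inequality
  have hlt : (μ (ball y R)).toReal < (A/2) * m := by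
    by_contra hge
    push_neg at hge
    apply hcon
    have h1 : m ≤ (2/A) * (μ (ball y R)).toReal := by
      have h2 := mul_le_mul_of_nonneg_left hge (by positivity : (0:ℝ) ≤ 2/A)
      calc m = (2/A)*((A/2)*m) := by field_simp
        _ ≤ (2/A)*(μ (ball y R)).toReal := h2
    calc μ (ball y (2*R)) = ENNReal.ofReal m := (ENNReal.ofReal_toReal (ne_of_lt hB.2)).symm
      _ ≤ ENNReal.ofReal ((2/A) * (μ (ball y R)).toReal) := ENNReal.ofReal_le_ofReal h1
      _ = ENNReal.ofReal (2/A) * ENNReal.ofReal ((μ (ball y R)).toReal) :=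
          ENNReal.ofReal_mul (by positivity)
      _ = ENNReal.ofReal (2/A) * μ (ball y R) := by
          rw [ENNReal.ofReal_toReal (ne_of_lt hBR.2)]
      _ ≤ ((1 + Real.toNNReal (2/A) : ℝ≥0) : ℝ≥0∞) * μ (ball y R) := by
          apply mul_le_mul_left
          rw [ENNReal.ofReal]
          exact_mod_cast ENNReal.coe_le_coe.2 (le_add_self)
  -- scales
  set rad : ℕ → ℝ := fun k => R / 2^(k+1) with hrad
  have hrad0 : ∀ k, 0 < rad k := by
    intro k; rw [hrad]; positivity
  have hradR : ∀ k, rad k ≤ R/2 := by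
    intro k; rw [hrad]
    apply div_le_div_of_nonneg_left hR.le two_pos
    calc (2:ℝ) = 2^1 := (pow_one 2).symm
      _ ≤ 2^(k+1) := pow_le_pow_right₀ one_le_two (by omega)
  have hrad_half : ∀ k, rad k / 2 = rad (k+1) := by
    intro k; rw [hrad]
    simp only []
    rw [div_div, ← pow_succ]
  -- the one-step inequality
  have hstep : ∀ (k : ℕ) (x : EuclideanSpace ℝ (Fin n)), x ∈ closedBall y (R/2) →
      m⁻¹ * (μ (ball x (rad (k+1)))).toReal ≤
        G * ρ^((k:ℕ):ℝ) * (m⁻¹ * (μ (ball x (rad k))).toReal)^σ := by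
    intro k x hx
    have hxy : dist x y ≤ R/2 := mem_closedBall.mp hx
    have hsubk : closedBall x (rad k) ⊆ ball y (2*R) := by
      intro z hz
      rw [mem_ball]
      calc dist z y ≤ dist z x + dist x y := dist_triangle _ _ _
        _ ≤ rad k + R/2 := add_le_add (mem_closedBall.mp hz) hxy
        _ ≤ R/2 + R/2 := by linarith [hradR k]
        _ < 2*R := by linarith
    have h1 := aux_step μ hμ p σ C_S hp hσ hC hSob y R hR x (rad k) (hrad0 k) hsubk
    rw [hrad_half k] at h1
    refine le_trans h1 ?_
    apply mul_le_mul_of_nonneg_right _ (Real.rpow_nonneg (by positivity) _)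
    -- coefficient bound
    have h2 : 8*R/(rad k) + 1 ≤ 32 * 2^k := by
      have h3 : 8*R/(rad k) = 8*2^(k+1) := by
        rw [hrad]
        field_simp
      rw [h3]
      have : (8:ℝ)*2^(k+1) + 1 ≤ 8*2^(k+1) + 8*2^(k+1) := by
        have : (1:ℝ) ≤ 8*2^(k+1) := by
          have : (1:ℝ) ≤ 2^(k+1) := one_le_pow₀ one_le_two
          linarith
        linarith
      calc (8:ℝ)*2^(k+1) + 1 ≤ 8*2^(k+1) + 8*2^(k+1) := this
        _ = 32 * 2^k := by ring
    have h4 : C_S * (8*R/(rad k) + 1) ≤ 32*C_S*2^k := by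
      calc C_S * (8*R/(rad k) + 1) ≤ C_S * (32*2^k) :=
            mul_le_mul_of_nonneg_left h2 hC.le
        _ = 32*C_S*2^k := by ring
    have hbase0 : (0:ℝ) ≤ C_S * (8*R/(rad k) + 1) :=
      mul_nonneg hC.le (add_nonneg (div_nonneg (by linarith) (hrad0 k).le) zero_le_one)
    calc (C_S * (8*R/(rad k) + 1))^(p*σ) ≤ (32*C_S*2^k)^(p*σ) :=
          Real.rpow_le_rpow hbase0 h4 hpσ.le
      _ = G * ρ^((k:ℕ):ℝ) := by
          rw [show (32:ℝ)*C_S*2^k = (32*C_S)*((2:ℝ)^((k:ℕ):ℝ)) from by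
                rw [Real.rpow_natCast],
            Real.mul_rpow (by positivity) (Real.rpow_nonneg (by norm_num) _)]
          congr 1
          rw [hρ, ← Real.rpow_mul (by norm_num : (0:ℝ) ≤ 2),
            ← Real.rpow_mul (by norm_num : (0:ℝ) ≤ 2)]
          ring_nf

  -- key decay estimate, by induction on the scale index
  have hW : ∀ (k : ℕ) (x : EuclideanSpace ℝ (Fin n)), x ∈ closedBall y (R/2) →
      m⁻¹ * (μ (ball x (rad k))).toReal ≤
        A * ρ^(-((k:ℕ):ℝ)/(σ-1)) * (2:ℝ)^(-(σ^k)) := by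
    intro k
    induction k with
    | zero =>
      intro x hx
      have hsub0 : ball x (rad 0) ⊆ ball y R := by
        intro z hz
        rw [mem_ball]
        have h1 : rad 0 = R/2 := by rw [hrad]; norm_num
        have h2 : dist z x < R/2 := by rw [← h1]; exact mem_ball.mp hz
        calc dist z y ≤ dist z x + dist x y := dist_triangle _ _ _
          _ < R/2 + R/2 := add_lt_add_of_lt_of_le h2 (mem_closedBall.mp hx)
          _ = R := by ring
      have h2 : (μ (ball x (rad 0))).toReal ≤ (μ (ball y R)).toReal :=
        ENNReal.toReal_mono (ne_of_lt hBR.2) (measure_mono hsub0)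
      have h3 : m⁻¹ * (μ (ball x (rad 0))).toReal ≤ A/2 := by
        calc m⁻¹ * (μ (ball x (rad 0))).toReal ≤ m⁻¹ * ((A/2)*m) :=
              mul_le_mul_of_nonneg_left (le_of_lt (lt_of_le_of_lt h2 hlt))
                (inv_nonneg.2 hm0.le)
          _ = A/2 := by field_simp
      refine h3.trans (le_of_eq ?_)
      rw [pow_zero, Nat.cast_zero, neg_zero, zero_div, Real.rpow_zero,
        Real.rpow_neg_one]
      norm_num
      ring
    | succ k ih =>
      intro x hx
      have h1 := hstep k x hx
      have h2 := ih x hx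
      have hak0 : 0 ≤ m⁻¹ * (μ (ball x (rad k))).toReal := by positivity
      have h3 : (m⁻¹ * (μ (ball x (rad k))).toReal)^σ ≤
          (A * ρ^(-((k:ℕ):ℝ)/(σ-1)) * (2:ℝ)^(-(σ^k)))^σ :=
        Real.rpow_le_rpow hak0 h2 hσ0.le
      have h4 : G * ρ^((k:ℕ):ℝ) * (m⁻¹ * (μ (ball x (rad k))).toReal)^σ ≤
          G * ρ^((k:ℕ):ℝ) * (A * ρ^(-((k:ℕ):ℝ)/(σ-1)) * (2:ℝ)^(-(σ^k)))^σ :=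
        mul_le_mul_of_nonneg_left h3 (by positivity)
      refine le_trans h1 (le_trans h4 ?_)
      have hx2 : (0:ℝ) ≤ (2:ℝ) := by norm_num
      have e1 : (A * ρ^(-((k:ℕ):ℝ)/(σ-1)) * (2:ℝ)^(-(σ^k)))^σ
          = A^σ * (ρ^(-((k:ℕ):ℝ)/(σ-1)))^σ * ((2:ℝ)^(-(σ^k)))^σ := by
        rw [Real.mul_rpow (by positivity) (by positivity),
          Real.mul_rpow (by positivity) (by positivity)]
      have e2 : ((2:ℝ)^(-(σ^k)))^σ = (2:ℝ)^(-(σ^(k+1))) := by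
        rw [← Real.rpow_mul hx2]
        congr 1
        rw [pow_succ]
        ring
      have e3 : (ρ^(-((k:ℕ):ℝ)/(σ-1)))^σ = ρ^(-((k:ℕ):ℝ)*σ/(σ-1)) := by
        rw [← Real.rpow_mul hρ0.le]
        congr 1
        ring
      have e4 : ρ^((k:ℕ):ℝ) * ρ^(-((k:ℕ):ℝ)*σ/(σ-1)) = ρ^(-((k:ℕ):ℝ)/(σ-1)) := by
        rw [← Real.rpow_add hρ0]
        congr 1
        field_simp
        ring
      have e5 : ρ^(-(((k+1:ℕ)):ℝ)/(σ-1)) = ρ^(-((k:ℕ):ℝ)/(σ-1)) * ρ^(-(1:ℝ)/(σ-1)) := by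
        rw [← Real.rpow_add hρ0]
        congr 1
        push_cast
        field_simp
        ring
      have hkey : G * A^σ ≤ A * ρ^(-(1:ℝ)/(σ-1)) := by
        have hAs : A^(σ-1) ≤ H := by
          have h5 : A ≤ H^((1:ℝ)/(σ-1)) := min_le_right _ _
          calc A^(σ-1) ≤ (H^((1:ℝ)/(σ-1)))^(σ-1) :=
                Real.rpow_le_rpow hA0.le h5 hσ1.le
            _ = H := by
                rw [← Real.rpow_mul hH0.le, one_div,
                  inv_mul_cancel₀ (ne_of_gt hσ1), Real.rpow_one]
        have h6 : A^σ = A^(σ-1) * A := by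
          have h7 := Real.rpow_add hA0 (σ-1) 1
          rw [Real.rpow_one] at h7
          rw [show (σ-1)+1 = σ by ring] at h7
          exact h7
        have h7 : G * H ≤ ρ^(-(1:ℝ)/(σ-1)) := by
          have h8 : G * (G * ρ^((1:ℝ)/(σ-1)))⁻¹ = (ρ^((1:ℝ)/(σ-1)))⁻¹ := by
            field_simp
          rw [hH, h8, ← Real.rpow_neg hρ0.le, neg_div]
        calc G * A^σ = (G * A^(σ-1)) * A := by rw [h6]; ring
          _ ≤ (G * H) * A :=
              mul_le_mul_of_nonneg_right (mul_le_mul_of_nonneg_left hAs hG0.le) hA0.le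
          _ ≤ ρ^(-(1:ℝ)/(σ-1)) * A := mul_le_mul_of_nonneg_right h7 hA0.le
          _ = A * ρ^(-(1:ℝ)/(σ-1)) := mul_comm _ _
      rw [e1, e3]
      calc G * ρ^((k:ℕ):ℝ) * (A^σ * ρ^(-((k:ℕ):ℝ)*σ/(σ-1)) * ((2:ℝ)^(-(σ^k)))^σ)
          = (G * A^σ) * (ρ^((k:ℕ):ℝ) * ρ^(-((k:ℕ):ℝ)*σ/(σ-1))) * ((2:ℝ)^(-(σ^k)))^σ := by
            ring
        _ = (G * A^σ) * ρ^(-((k:ℕ):ℝ)/(σ-1)) * (2:ℝ)^(-(σ^(k+1))) := by rw [e4, e2]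
        _ ≤ (A * ρ^(-(1:ℝ)/(σ-1))) * ρ^(-((k:ℕ):ℝ)/(σ-1)) * (2:ℝ)^(-(σ^(k+1))) := by
            apply mul_le_mul_of_nonneg_right
              (mul_le_mul_of_nonneg_right hkey (by positivity)) (by positivity)
        _ = A * ρ^(-(((k+1:ℕ)):ℝ)/(σ-1)) * (2:ℝ)^(-(σ^(k+1))) := by
            rw [e5]; ring
  -- covering estimate at every scale
  have hkbound : ∀ k : ℕ, (μ (ball y (R/4))).toReal ≤
      (4*((n:ℝ)+1))^n * 2^(k*n) * (m * (2:ℝ)^(-(σ^k))) := by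
    intro k
    have hMeq : R/4 * (2*((n:ℝ)+1)) / (rad k) ≤ (((n+1)*2^k : ℕ):ℝ) := by
      have hcalc : R/4 * (2*((n:ℝ)+1)) / (R / 2^(k+1)) = ((n:ℝ)+1)*2^k := by
        field_simp
        ring
      rw [hrad]
      simp only []
      rw [hcalc]
      push_cast
      exact le_refl _
    obtain ⟨T, hTcard, hTmem, hTcover⟩ :=
      aux_grid y R (rad k) ((n+1)*2^k) hR (hrad0 k) (hradR k) hMeq
    set β : ℝ := m * (2:ℝ)^(-(σ^k)) with hβ
    have h2k : (0:ℝ) < (2:ℝ)^(-(σ^k)) := Real.rpow_pos_of_pos two_pos _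
    have hβ0 : 0 ≤ β := by positivity
    have hone : A * ρ^(-((k:ℕ):ℝ)/(σ-1)) ≤ 1 := by
      have hnp : -((k:ℕ):ℝ)/(σ-1) ≤ 0 :=
        div_nonpos_of_nonpos_of_nonneg (neg_nonpos.2 (Nat.cast_nonneg k)) hσ1.le
      calc A * ρ^(-((k:ℕ):ℝ)/(σ-1)) ≤ 1 * 1 :=
            mul_le_mul hA1 (Real.rpow_le_one_of_one_le_of_nonpos hρ1 hnp)
              (Real.rpow_nonneg (by positivity) _) zero_le_one
        _ = 1 := one_mul _
    have hball : ∀ g ∈ T, μ (ball g (rad k)) ≤ ENNReal.ofReal β := by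
      intro g hg
      have h2 := hW k g (hTmem g hg)
      have h3 : (μ (ball g (rad k))).toReal ≤ β := by
        have h4 : (μ (ball g (rad k))).toReal = m * (m⁻¹ * (μ (ball g (rad k))).toReal) := by
          field_simp
        rw [h4, hβ]
        calc m * (m⁻¹ * (μ (ball g (rad k))).toReal)
            ≤ m * (A * ρ^(-((k:ℕ):ℝ)/(σ-1)) * (2:ℝ)^(-(σ^k))) :=
              mul_le_mul_of_nonneg_left h2 hm0.le
          _ = (A * ρ^(-((k:ℕ):ℝ)/(σ-1))) * (m * (2:ℝ)^(-(σ^k))) := by ring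
          _ ≤ 1 * (m * (2:ℝ)^(-(σ^k))) :=
              mul_le_mul_of_nonneg_right hone (by positivity)
          _ = m * (2:ℝ)^(-(σ^k)) := one_mul _
      rw [← ENNReal.ofReal_toReal (ne_of_lt (hμ g (rad k) (hrad0 k)).2)]
      exact ENNReal.ofReal_le_ofReal h3
    have hsum : μ (ball y (R/4)) ≤ (T.card : ℝ≥0∞) * ENNReal.ofReal β := by
      calc μ (ball y (R/4)) ≤ μ (⋃ g ∈ T, ball g (rad k)) := measure_mono hTcover
        _ ≤ ∑ g ∈ T, μ (ball g (rad k)) := measure_biUnion_finset_le _ _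
        _ ≤ ∑ _g ∈ T, ENNReal.ofReal β := Finset.sum_le_sum hball
        _ = (T.card : ℝ≥0∞) * ENNReal.ofReal β := by
            rw [Finset.sum_const, nsmul_eq_mul]
    have hreal : (μ (ball y (R/4))).toReal ≤ (T.card : ℝ) * β := by
      have hne : ((T.card : ℝ≥0∞) * ENNReal.ofReal β) ≠ ⊤ :=
        ENNReal.mul_ne_top (natCast_ne_top _) ofReal_ne_top
      calc (μ (ball y (R/4))).toReal ≤ ((T.card : ℝ≥0∞) * ENNReal.ofReal β).toReal :=
            ENNReal.toReal_mono hne hsum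
        _ = (T.card : ℝ) * β := by
            rw [ENNReal.toReal_mul, ENNReal.toReal_natCast, ENNReal.toReal_ofReal hβ0]
    refine le_trans hreal (mul_le_mul_of_nonneg_right ?_ hβ0)
    have hcard2 : (T.card : ℝ) ≤ ((2*((n+1)*2^k)+1 : ℕ) : ℝ)^n := by
      have := hTcard
      have h5 : (T.card : ℝ) ≤ (((2*((n+1)*2^k)+1)^n : ℕ) : ℝ) := Nat.cast_le.2 this
      calc (T.card : ℝ) ≤ (((2*((n+1)*2^k)+1)^n : ℕ) : ℝ) := h5
        _ = ((2*((n+1)*2^k)+1 : ℕ) : ℝ)^n := by push_cast; ring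
    refine hcard2.trans ?_
    have hin : ((2*((n+1)*2^k)+1 : ℕ) : ℝ) ≤ (4*((n:ℝ)+1))*2^k := by
      push_cast
      have hk1 : (1:ℝ) ≤ 2^k := one_le_pow₀ one_le_two
      nlinarith [Nat.cast_nonneg (α := ℝ) n]
    calc ((2*((n+1)*2^k)+1 : ℕ) : ℝ)^n ≤ ((4*((n:ℝ)+1))*2^k)^n :=
          pow_le_pow_left₀ (by positivity) hin n
      _ = (4*((n:ℝ)+1))^n * 2^(k*n) := by rw [mul_pow, ← pow_mul]
  -- choose the scale and conclude
  have hc4 := hμ y (R/4) (by linarith)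
  have hc0 : 0 < (μ (ball y (R/4))).toReal :=
    ENNReal.toReal_pos (ne_of_gt hc4.1) (ne_of_lt hc4.2)
  set c0 : ℝ := (μ (ball y (R/4))).toReal with hc0def
  set Cn : ℝ := (4*((n:ℝ)+1))^n with hCn
  have hCn0 : 0 < Cn := by positivity
  obtain ⟨D, hD⟩ := pow_unbounded_of_one_lt (Cn * m / c0) (one_lt_two (α := ℝ))
  obtain ⟨k, hk⟩ := aux_exp_choice σ hσ n D
  have h1 := hkbound k
  have h2 : (2:ℝ)^(-(σ^k)) ≤ (2:ℝ)^(-(((k*n : ℕ):ℝ) + (D:ℝ))) :=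
    Real.rpow_le_rpow_of_exponent_le one_le_two (neg_le_neg hk)
  have h3 : (2:ℝ)^(k*n) * (2:ℝ)^(-(((k*n : ℕ):ℝ) + (D:ℝ))) = ((2:ℝ)^D)⁻¹ := by
    rw [← Real.rpow_natCast (2:ℝ) (k*n), ← Real.rpow_add two_pos,
      ← Real.rpow_natCast (2:ℝ) D, ← Real.rpow_neg (by norm_num : (0:ℝ) ≤ 2)]
    congr 1
    ring
  have h5 : Cn * m < c0 * 2^D := by
    have h6 := (div_lt_iff₀ hc0).mp hD
    linarith
  have h4 : Cn * m * ((2:ℝ)^D)⁻¹ < c0 := by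
    have hpD : (0:ℝ) < 2^D := by positivity
    calc Cn * m * ((2:ℝ)^D)⁻¹ < (c0 * 2^D) * ((2:ℝ)^D)⁻¹ :=
          mul_lt_mul_of_pos_right h5 (by positivity)
      _ = c0 := by field_simp
  have h6 : c0 ≤ Cn * m * ((2:ℝ)^D)⁻¹ := by
    have h2k : (0:ℝ) < (2:ℝ)^(k*n) := by positivity
    calc c0 ≤ Cn * 2^(k*n) * (m * (2:ℝ)^(-(σ^k))) := h1
      _ ≤ Cn * 2^(k*n) * (m * (2:ℝ)^(-(((k*n : ℕ):ℝ) + (D:ℝ)))) := by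
          apply mul_le_mul_of_nonneg_left
            (mul_le_mul_of_nonneg_left h2 hm0.le) (by positivity)
      _ = Cn * m * ((2:ℝ)^(k*n) * (2:ℝ)^(-(((k*n : ℕ):ℝ) + (D:ℝ)))) := by ring
      _ = Cn * m * ((2:ℝ)^D)⁻¹ := by rw [h3]
  exact absurd h6 (not_le.mpr h4)
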